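/- Let T_A = Aℤⁿ/qℤⁿ be a discrete weighted torus satisfying the distance condition. Then the total scalar curvature is non-positive: Σ_{[x]∈T_A} R([x]) ≤ 0. -/

import Mathlib

open Filter Topology

noncomputable section

namespace PMT

/-- The `i`-th standard unit vector in `ℤⁿ`. -/
def e (n : ℕ) (i : Fin n) : Fin n → ℤ := fun j => if j = i then 1 else 0

/-- The grid graph on `ℤⁿ`: `x ∼ y` iff `‖x − y‖₁ = 1`. -/
def grid (n : ℕ) : SimpleGraph (Fin n → ℤ) where
  Adj x y := (∑ i, |x i - y i|) = 1
  symm := by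
    refine ⟨?_⟩
    intro x y h
    try beta_reduce at h ⊢
    have h' : ∀ i ∈ Finset.univ, |y i - x i| = |x i - y i| :=
      fun i _ => abs_sub_comm _ _
    rw [Finset.sum_congr rfl h']
    exact h
  loopless := by refine ⟨?_⟩; intro x h; simp at h

/-- The graph Laplacian `Δf(x) = Σ_{y∼x} w(x,y)(f(y)−f(x))` of an integer-valued function. -/
def lap {V : Type*} (G : SimpleGraph V) (w : V → V → ℝ) (f : V → ℤ) (x : V) : ℝ :=
  ∑ᶠ y ∈ {y | G.Adj x y}, w x y * ((f y : ℝ) - (f x : ℝ))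

/-- `f : V → ℤ` is 1-Lipschitz with respect to the combinatorial graph distance. -/
def Lip1 {V : Type*} (G : SimpleGraph V) (f : V → ℤ) : Prop :=
  ∀ x y, |f x - f y| ≤ (G.dist x y : ℤ)

/-- Ollivier curvature of the pair `(x, y)`:
`κ(x,y) = inf {Δf(x) − Δf(y) | f : V → ℤ, f 1-Lipschitz, f(y) = f(x) + 1}`. -/
def kappa {V : Type*} (G : SimpleGraph V) (w : V → V → ℝ) (x y : V) : ℝ :=
  sInf {r | ∃ f : V → ℤ, Lip1 G f ∧ f y = f x + 1 ∧ r = lap G w f x - lap G w f y}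

/-- Scalar curvature `R(x) = Σ_{y∼x} κ(x,y)`. -/
def scal {V : Type*} (G : SimpleGraph V) (w : V → V → ℝ) (x : V) : ℝ :=
  ∑ᶠ y ∈ {y | G.Adj x y}, kappa G w x y

/-- A weighted grid graph `(ℤⁿ, w)`: symmetric weights, positive on edges. -/
structure GridWeight (n : ℕ) where
  w : (Fin n → ℤ) → (Fin n → ℤ) → ℝ
  symm : ∀ x y, w x y = w y x
  pos : ∀ x y, (grid n).Adj x y → 0 < w x y

/-- The quantity `Abs(x)` measuring the distortion from the standard grid graph. -/
def Absf (n : ℕ) (w : (Fin n → ℤ) → (Fin n → ℤ) → ℝ) (x : Fin n → ℤ) : ℝ :=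
  ∑ i, ∑ j, if i ≠ j then
      (|w x (x + e n i) - w (x + e n j) (x + e n j + e n i)| +
       |w x (x + e n i) - w (x - e n j) (x - e n j + e n i)| +
       |w x (x - e n i) - w (x + e n j) (x + e n j - e n i)| +
       |w x (x - e n i) - w (x - e n j) (x - e n j - e n i)|)
    else 0

/-- The `ℓ^∞` norm `‖x‖_∞` of `x ∈ ℤⁿ`, as a natural number. -/
def nInf {n : ℕ} (x : Fin n → ℤ) : ℕ := Finset.univ.sup fun i => (x i).natAbs

/-- The cube `Q_r = {y ∈ ℤⁿ : ‖y‖∞ ≤ r}` as a finset. -/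
def Qr (n r : ℕ) : Finset (Fin n → ℤ) := Finset.Icc (fun _ => -(r : ℤ)) (fun _ => (r : ℤ))

/-- `Σ_{e ∈ E_r} w(e)`: the sum of weights of edges with exactly one endpoint in `Q_r`
(each such edge is counted once, via its endpoint inside `Q_r`). -/
def ErSum (n : ℕ) (w : (Fin n → ℤ) → (Fin n → ℤ) → ℝ) (r : ℕ) : ℝ :=
  ∑ x ∈ Qr n r, ∑ i,
    ((if x + e n i ∉ Qr n r then w x (x + e n i) else 0) +
     (if x - e n i ∉ Qr n r then w x (x - e n i) else 0))

/-- `Σ_{τ ∈ Ẽ_r} w(τ)`: the sum of weights of edges joining the sphere `S_{r+1}` to the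
sphere `S_{r+2}` (each such edge is counted once, via its endpoint in `S_{r+1}`). -/
def TErSum (n : ℕ) (w : (Fin n → ℤ) → (Fin n → ℤ) → ℝ) (r : ℕ) : ℝ :=
  ∑ x ∈ Qr n (r + 1), if nInf x = r + 1 then
      (∑ i, ((if nInf (x + e n i) = r + 2 then w x (x + e n i) else 0) +
             (if nInf (x - e n i) = r + 2 then w x (x - e n i) else 0)))
    else 0

/-- The weighted grid graph `(ℤⁿ, w)` is asymptotically flat: there is `p > n` with
`w = 1 + o(1)`, `Abs(x) = O(‖x‖∞^{−p})` and `|R(x)| = O(‖x‖∞^{−p})` as `‖x‖∞ → ∞`. -/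
def AsympFlatGrid (n : ℕ) (W : GridWeight n) : Prop :=
  ∃ p : ℝ, (n : ℝ) < p ∧
    (∀ ε : ℝ, 0 < ε → ∃ M : ℕ, ∀ x y, (grid n).Adj x y → M ≤ nInf x → |W.w x y - 1| ≤ ε) ∧
    (∃ C : ℝ, ∃ M : ℕ, 0 < M ∧ ∀ x, M ≤ nInf x → Absf n W.w x ≤ C * (nInf x : ℝ) ^ (-p)) ∧
    (∃ C : ℝ, ∃ M : ℕ, 0 < M ∧ ∀ x, M ≤ nInf x → |scal (grid n) W.w x| ≤ C * (nInf x : ℝ) ^ (-p))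


/-- The data of a discrete torus `T_A = Aℤⁿ/qℤⁿ`: an integer matrix `A` with
`det A ≠ 0`, and `q = k·|det A|` for some `k ∈ ℤ₊`. We parametrize the lattice `Aℤⁿ` by
`ℤⁿ` via `z ↦ Az` (so the vertex `x = Az` corresponds to `z`, and `α_i = A e_i`
corresponds to `e_i`). -/
structure TorusData (n : ℕ) where
  A : Matrix (Fin n) (Fin n) ℤ
  hdet : A.det ≠ 0
  k : ℕ
  hk : 0 < k

/-- `q = k·|det A|`. -/
def TorusData.q {n : ℕ} (T : TorusData n) : ℕ := T.k * T.A.det.natAbs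

/-- The subgroup `{z ∈ ℤⁿ | Az ∈ qℤⁿ}` of `ℤⁿ`; under `z ↦ Az` it corresponds to the
sublattice `qℤⁿ ⊆ Aℤⁿ`. -/
def TorusData.lat {n : ℕ} (T : TorusData n) : AddSubgroup (Fin n → ℤ) where
  carrier := {z | ∀ j, ((T.q : ℤ)) ∣ T.A.mulVec z j}
  zero_mem' := by intro j; simp [Matrix.mulVec_zero]
  add_mem' := by
    intro a b ha hb j
    rw [Matrix.mulVec_add]
    exact dvd_add (ha j) (hb j)
  neg_mem' := by
    intro a ha j
    rw [Matrix.mulVec_neg]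
    exact dvd_neg.mpr (ha j)

/-- The vertex set of the discrete torus `T_A = Aℤⁿ/qℤⁿ` (in the `z`-parametrization). -/
def TorusV {n : ℕ} (T : TorusData n) : Type := (Fin n → ℤ) ⧸ T.lat

instance {n : ℕ} (T : TorusData n) : AddCommGroup (TorusV T) :=
  QuotientAddGroup.Quotient.addCommGroup T.lat

/-- The quotient map `Aℤⁿ → T_A` (in the `z`-parametrization, `z` stands for `x = Az`). -/
def tmk {n : ℕ} (T : TorusData n) (z : Fin n → ℤ) : TorusV T := QuotientAddGroup.mk z

/-- The graph structure of the discrete torus: `[x] ∼ [y]` iff `x − y ∈ qℤⁿ ± α_i`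
for some `i` (and `[x] ≠ [y]`, so that the graph is simple). -/
def torusG {n : ℕ} (T : TorusData n) : SimpleGraph (TorusV T) where
  Adj a b := a ≠ b ∧ ∃ i : Fin n, b - a = tmk T (e n i) ∨ a - b = tmk T (e n i)
  symm := by
    refine ⟨?_⟩
    rintro a b ⟨hne, i, h | h⟩
    · exact ⟨hne.symm, i, Or.inr h⟩
    · exact ⟨hne.symm, i, Or.inl h⟩
  loopless := by refine ⟨?_⟩; rintro a ⟨hne, -⟩; exact hne rfl

/-- The distance condition: every combinatorial ball of radius 2 in the lattice `Aℤⁿ`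
embeds isometrically into the torus, i.e. `d(u,v) = d([u],[v])` for all `u, v ∈ B₂(x)`. -/
def DistCond {n : ℕ} (T : TorusData n) : Prop :=
  ∀ x u v : Fin n → ℤ, (grid n).dist x u ≤ 2 → (grid n).dist x v ≤ 2 →
    (grid n).dist u v = (torusG T).dist (tmk T u) (tmk T v)

/-! ### Auxiliary lemmas for Statement 13 -/

section Aux

variable {n : ℕ}

/-- The ℓ¹ norm of an integer vector, as a natural number. -/
def norm1 (u : Fin n → ℤ) : ℕ := ∑ i, (u i).natAbs

lemma norm1_zero : norm1 (0 : Fin n → ℤ) = 0 := by simp [norm1]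

lemma norm1_eq_zero {u : Fin n → ℤ} : norm1 u = 0 ↔ u = 0 := by
  constructor
  · intro h
    funext i
    have := Finset.sum_eq_zero_iff.mp h i (Finset.mem_univ i)
    simpa [Int.natAbs_eq_zero] using this
  · rintro rfl; exact norm1_zero

lemma norm1_neg (u : Fin n → ℤ) : norm1 (-u) = norm1 u := by
  simp [norm1]

lemma norm1_add_le (u v : Fin n → ℤ) : norm1 (u + v) ≤ norm1 u + norm1 v := by
  classical
  rw [norm1, norm1, norm1, ← Finset.sum_add_distrib]
  exact Finset.sum_le_sum fun i _ => Int.natAbs_add_le _ _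

lemma coord_le_norm1 (u : Fin n → ℤ) (i : Fin n) : u i ≤ (norm1 u : ℤ) := by
  calc u i ≤ ((u i).natAbs : ℤ) := Int.le_natAbs
  _ ≤ (norm1 u : ℤ) := by
      exact_mod_cast Finset.single_le_sum (f := fun j => (u j).natAbs)
        (fun j _ => Nat.zero_le _) (Finset.mem_univ i)

lemma grid_adj_iff {u v : Fin n → ℤ} : (grid n).Adj u v ↔ norm1 (u - v) = 1 := by
  have : (∑ i, |u i - v i|) = ((norm1 (u - v) : ℤ)) := by
    rw [norm1]
    push_cast
    refine Finset.sum_congr rfl fun i _ => ?_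
    rw [Pi.sub_apply]
  constructor
  · intro h
    have h2 : ((norm1 (u - v) : ℤ)) = 1 := by rw [← this]; exact h
    exact_mod_cast h2
  · intro h
    show (∑ i, |u i - v i|) = 1
    rw [this, h]; norm_num

lemma norm1_smul_e (s : ℤ) (j : Fin n) : norm1 (s • e n j) = s.natAbs := by
  classical
  have h1 : ∀ k, (s • e n j) k = if k = j then s else 0 := by
    intro k; by_cases hk : k = j <;> simp [e, hk]
  rw [norm1]
  calc (∑ k, ((s • e n j) k).natAbs) = ∑ k, if k = j then s.natAbs else 0 := by
        refine Finset.sum_congr rfl fun k _ => ?_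
        rw [h1 k]
        by_cases hk : k = j <;> simp [hk]
  _ = s.natAbs := by rw [Finset.sum_ite_eq' Finset.univ j fun _ => s.natAbs]; simp

lemma norm1_sub_single {σ : Fin n → ℤ} {j : Fin n} {s : ℤ}
    (h : (σ j - s).natAbs = (σ j).natAbs - 1) (h1 : 1 ≤ (σ j).natAbs) :
    norm1 (σ - s • e n j) = norm1 σ - 1 := by
  classical
  have hv : ∀ k, (σ - s • e n j) k = if k = j then σ j - s else σ k := by
    intro k; by_cases hk : k = j <;> simp [e, hk]
  have hsplit : ∀ τ : Fin n → ℤ, norm1 τ =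
      (τ j).natAbs + ∑ k ∈ Finset.univ.erase j, (τ k).natAbs := by
    intro τ
    rw [norm1, ← Finset.add_sum_erase _ _ (Finset.mem_univ j)]
  rw [hsplit, hsplit σ, hv j, if_pos rfl, h]
  have : ∑ k ∈ Finset.univ.erase j, ((σ - s • e n j) k).natAbs
      = ∑ k ∈ Finset.univ.erase j, (σ k).natAbs := by
    refine Finset.sum_congr rfl fun k hk => ?_
    rw [hv k, if_neg (Finset.ne_of_mem_erase hk)]
  rw [this]
  omega

/-- one ℓ¹-step towards the origin -/
lemma step_ex {σ : Fin n → ℤ} (h : σ ≠ 0) :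
    ∃ (j : Fin n) (s : ℤ), (s = 1 ∨ s = -1) ∧
      norm1 (σ - s • e n j) = norm1 σ - 1 ∧ 1 ≤ norm1 σ := by
  classical
  have hnz : norm1 σ ≠ 0 := fun h0 => h (norm1_eq_zero.mp h0)
  obtain ⟨j, hj⟩ : ∃ j, σ j ≠ 0 := by
    by_contra hc
    push_neg at hc
    exact h (funext fun j => hc j)
  have hj1 : 1 ≤ (σ j).natAbs := by omega
  have hnorm : 1 ≤ norm1 σ := Nat.one_le_iff_ne_zero.mpr hnz
  rcases lt_or_ge 0 (σ j) with hpos | hle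
  · exact ⟨j, 1, Or.inl rfl, norm1_sub_single (by omega) hj1, hnorm⟩
  · exact ⟨j, -1, Or.inr rfl, norm1_sub_single (by omega) hj1, hnorm⟩

lemma grid_exists_walk : ∀ (N : ℕ) (u v : Fin n → ℤ), norm1 (u - v) = N →
    ∃ p : (grid n).Walk u v, p.length = N := by
  intro N
  induction N with
  | zero =>
    intro u v h
    have : u = v := by
      have := norm1_eq_zero.mp h
      exact sub_eq_zero.mp this
    subst this
    exact ⟨SimpleGraph.Walk.nil, rfl⟩
  | succ N ih =>
    intro u v h
    have hne : u - v ≠ 0 := by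
      intro h0
      rw [h0, norm1_zero] at h
      omega
    obtain ⟨j, s, hs, hstep, hpos⟩ := step_ex hne
    set u' : Fin n → ℤ := u - s • e n j with hu'
    have hadj : (grid n).Adj u u' := by
      rw [grid_adj_iff]
      have : u - u' = s • e n j := by rw [hu']; ring
      rw [this, norm1_smul_e]
      rcases hs with rfl | rfl <;> rfl
    have h2 : norm1 (u' - v) = N := by
      have : u' - v = (u - v) - s • e n j := by rw [hu']; ring
      rw [this, hstep, h]
      omega
    obtain ⟨p, hp⟩ := ih u' v h2
    exact ⟨SimpleGraph.Walk.cons hadj p, by simp [hp]⟩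

lemma grid_walk_le {u v : Fin n → ℤ} (p : (grid n).Walk u v) :
    norm1 (u - v) ≤ p.length := by
  induction p with
  | nil => simp [norm1_zero]
  | cons hadj p ih =>
    rename_i a b c
    have h1 : norm1 (a - b) = 1 := grid_adj_iff.mp hadj
    have : a - c = (a - b) + (b - c) := by ring
    calc norm1 (a - c) ≤ norm1 (a - b) + norm1 (b - c) := by rw [this]; exact norm1_add_le _ _
    _ ≤ 1 + p.length := by rw [h1]; omega
    _ = p.length + 1 := by omega
    _ = _ := by simp

lemma grid_dist_eq (u v : Fin n → ℤ) : (grid n).dist u v = norm1 (u - v) := by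
  obtain ⟨p, hp⟩ := grid_exists_walk (norm1 (u - v)) u v rfl
  refine le_antisymm (hp ▸ SimpleGraph.dist_le p) ?_
  obtain ⟨q, hq⟩ := SimpleGraph.Reachable.exists_walk_length_eq_dist ⟨p⟩
  calc norm1 (u - v) ≤ q.length := grid_walk_le q
  _ = _ := hq

end Aux
section Torus

variable {n : ℕ} {T : TorusData n}

lemma tmk_eq_iff {u v : Fin n → ℤ} : tmk T u = tmk T v ↔ u - v ∈ T.lat :=
  QuotientAddGroup.eq_iff_sub_mem

lemma tmk_add (u v : Fin n → ℤ) : tmk T (u + v) = tmk T u + tmk T v := rfl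

lemma tmk_neg (u : Fin n → ℤ) : tmk T (-u) = -tmk T u := rfl

lemma split_ex (σ : Fin n → ℤ) (k : ℕ) :
    ∃ μ : Fin n → ℤ, norm1 μ ≤ k ∧ norm1 (σ - μ) ≤ norm1 σ - k := by
  induction k with
  | zero => exact ⟨0, by simp [norm1_zero], by simp⟩
  | succ k ih =>
    obtain ⟨μ, h1, h2⟩ := ih
    by_cases h0 : σ - μ = 0
    · exact ⟨μ, h1.trans (Nat.le_succ k), by rw [h0, norm1_zero]; omega⟩
    · obtain ⟨j, s, hs, hstep, hpos⟩ := step_ex h0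
      refine ⟨μ + s • e n j, ?_, ?_⟩
      · calc norm1 (μ + s • e n j) ≤ norm1 μ + norm1 (s • e n j) := norm1_add_le _ _
        _ ≤ k + 1 := by
            rw [norm1_smul_e]
            rcases hs with rfl | rfl <;> simp <;> omega
      · have heq : σ - (μ + s • e n j) = (σ - μ) - s • e n j := by ring
        rw [heq, hstep]
        omega

lemma torus_dist_eq (hd : DistCond T) (u σ : Fin n → ℤ) (h : norm1 σ ≤ 4) :
    (torusG T).dist (tmk T u) (tmk T (u + σ)) = norm1 σ := by
  obtain ⟨μ, hμ1, hμ2⟩ := split_ex σ 2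
  have hν : norm1 (σ - μ) ≤ 2 := hμ2.trans (by omega)
  have h1 : (grid n).dist (u + μ) u ≤ 2 := by
    rw [grid_dist_eq]
    simpa [add_sub_cancel_left] using hμ1
  have h2 : (grid n).dist (u + μ) (u + σ) ≤ 2 := by
    rw [grid_dist_eq]
    have : u + μ - (u + σ) = -(σ - μ) := by ring
    rw [this, norm1_neg]
    exact hν
  have := hd (u + μ) u (u + σ) h1 h2
  rw [grid_dist_eq] at this
  have huσ : u - (u + σ) = -σ := by ring
  rw [huσ, norm1_neg] at this
  exact this.symm

lemma lat_small (hd : DistCond T) {lam : Fin n → ℤ} (hlam : lam ∈ T.lat)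
    (h4 : norm1 lam ≤ 4) : lam = 0 := by
  have heq : tmk T (0 + lam) = tmk T 0 := tmk_eq_iff.mpr (by simpa using hlam)
  have hdist := torus_dist_eq hd 0 lam h4
  rw [heq, SimpleGraph.dist_self] at hdist
  exact norm1_eq_zero.mp hdist.symm

/-- The direction vector associated to `(i, sign)`. -/
def dvec (p : Fin n × Bool) : Fin n → ℤ := (if p.2 then (1 : ℤ) else -1) • e n p.1

lemma norm1_dvec (p : Fin n × Bool) : norm1 (dvec p) = 1 := by
  rw [dvec, norm1_smul_e]
  cases p.2 <;> rfl

lemma dvec_apply (p : Fin n × Bool) (k : Fin n) :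
    dvec p k = if k = p.1 then (if p.2 then (1 : ℤ) else -1) else 0 := by
  by_cases hk : k = p.1 <;> simp [dvec, e, hk]

lemma dvec_inj {p p' : Fin n × Bool} (h : dvec p = dvec p') : p = p' := by
  have h1 := congrFun h p.1
  rw [dvec_apply, dvec_apply, if_pos rfl] at h1
  have hfst : p.1 = p'.1 := by
    by_contra hne
    rw [if_neg hne] at h1
    split at h1 <;> omega
  rw [if_pos hfst] at h1
  have hsnd : p.2 = p'.2 := by
    cases hb : p.2 <;> cases hb' : p'.2
    · rfl
    · rw [hb'] at h1; norm_num at h1; simp_all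
    · rw [hb'] at h1; norm_num at h1; simp_all
    · rfl
  exact Prod.ext hfst hsnd

lemma tmk_dvec_eq_neg (i : Fin n) : tmk T (dvec (i, false)) = -tmk T (e n i) := by
  rw [dvec]
  simp only [if_neg Bool.false_ne_true]
  rw [neg_smul, one_smul]
  exact tmk_neg _

lemma tmk_dvec_eq_pos (i : Fin n) : tmk T (dvec (i, true)) = tmk T (e n i) := by
  simp [dvec]

lemma tmk_dvec_ne_zero (hd : DistCond T) (p : Fin n × Bool) : tmk T (dvec p) ≠ 0 := by
  intro h
  have hmem : dvec p ∈ T.lat := (QuotientAddGroup.eq_zero_iff _).mp h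
  have h0 := lat_small hd hmem (by rw [norm1_dvec]; omega)
  have h1 := norm1_dvec p
  rw [h0, norm1_zero] at h1
  exact one_ne_zero h1.symm

/-- The neighbour of `a` in direction `p`. -/
def nbr (a : TorusV T) (p : Fin n × Bool) : TorusV T := a + tmk T (dvec p)

lemma nbr_inj (hd : DistCond T) (a : TorusV T) : Function.Injective (nbr a) := by
  intro p p' h
  have h1 : tmk T (dvec p) = tmk T (dvec p') := add_left_cancel (a := a) h
  have h2 : dvec p - dvec p' ∈ T.lat := tmk_eq_iff.mp h1
  have h3 : norm1 (dvec p - dvec p') ≤ 4 := by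
    have h := norm1_add_le (dvec p) (-(dvec p'))
    rw [norm1_neg, norm1_dvec, norm1_dvec] at h
    rw [sub_eq_add_neg]
    omega
  exact dvec_inj (sub_eq_zero.mp (lat_small hd h2 h3))

lemma adj_iff (hd : DistCond T) {a b : TorusV T} :
    (torusG T).Adj a b ↔ ∃ p : Fin n × Bool, b = nbr a p := by
  constructor
  · rintro ⟨hne, i, h | h⟩
    · refine ⟨(i, true), ?_⟩
      rw [nbr, tmk_dvec_eq_pos, ← h]
      abel
    · refine ⟨(i, false), ?_⟩
      rw [nbr, tmk_dvec_eq_neg, ← h]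
      abel
  · rintro ⟨p, rfl⟩
    constructor
    · intro h
      rw [nbr] at h
      exact tmk_dvec_ne_zero hd p (left_eq_add.mp h)
    · refine ⟨p.1, ?_⟩
      rcases p with ⟨i, b⟩
      cases b
      · right
        rw [nbr, tmk_dvec_eq_neg]
        abel
      · left
        rw [nbr, tmk_dvec_eq_pos]
        abel

lemma nbr_set_eq (hd : DistCond T) (a : TorusV T) :
    {b | (torusG T).Adj a b} = Set.range (nbr a) := by
  ext b
  simp only [Set.mem_setOf_eq, Set.mem_range]
  rw [adj_iff hd]
  exact ⟨fun ⟨p, h⟩ => ⟨p, h.symm⟩, fun ⟨p, h⟩ => ⟨p, h.symm⟩⟩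

end Torus
section Torus2

variable {n : ℕ} {T : TorusData n}

lemma torus_reach (hd : DistCond T) : ∀ (N : ℕ) (u v : Fin n → ℤ), norm1 (u - v) = N →
    (torusG T).Reachable (tmk T u) (tmk T v) := by
  intro N
  induction N with
  | zero =>
    intro u v h
    have : u = v := sub_eq_zero.mp (norm1_eq_zero.mp h)
    subst this
    rfl
  | succ N ih =>
    intro u v h
    have hne : u - v ≠ 0 := by
      intro h0; rw [h0, norm1_zero] at h; omega
    obtain ⟨j, s, hs, hstep, hpos⟩ := step_ex hne
    set u' : Fin n → ℤ := u - s • e n j with hu'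
    have hsub : u - u' = s • e n j := by rw [hu']; ring
    have hne2 : tmk T u ≠ tmk T u' := by
      intro heq
      have hmem : u - u' ∈ T.lat := tmk_eq_iff.mp heq
      have h1 : norm1 (s • e n j) = 1 := by
        rw [norm1_smul_e]; rcases hs with rfl | rfl <;> rfl
      have := lat_small hd hmem (by rw [hsub, h1]; omega)
      rw [hsub] at this
      rw [this, norm1_zero] at h1
      exact one_ne_zero h1.symm
    have hadj : (torusG T).Adj (tmk T u) (tmk T u') := by
      refine ⟨hne2, j, ?_⟩
      rcases hs with rfl | rfl
      · right
        have : u - u' = (1 : ℤ) • e n j := hsub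
        rw [one_smul] at this
        show tmk T u - tmk T u' = tmk T (e n j)
        rw [← this]
        rfl
      · left
        have : u' - u = e n j := by rw [hu', neg_smul, one_smul]; ring
        show tmk T u' - tmk T u = tmk T (e n j)
        rw [← this]
        rfl
    have h2 : norm1 (u' - v) = N := by
      have : u' - v = (u - v) - s • e n j := by rw [hu']; ring
      rw [this, hstep, h]; omega
    exact hadj.reachable.trans (ih u' v h2)

lemma torus_connected (hd : DistCond T) : (torusG T).Connected := by
  haveI : Nonempty (TorusV T) := ⟨tmk T 0⟩
  refine ⟨fun a b => ?_⟩
  rw [← QuotientAddGroup.out_eq' a, ← QuotientAddGroup.out_eq' b]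
  exact torus_reach hd _ _ _ rfl

lemma q_ne_zero (T : TorusData n) : T.q ≠ 0 := by
  have h1 : T.k ≠ 0 := T.hk.ne'
  have h2 : T.A.det.natAbs ≠ 0 := Int.natAbs_ne_zero.mpr T.hdet
  exact Nat.mul_ne_zero h1 h2

lemma mem_lat_of_dvd {w : Fin n → ℤ} (h : ∀ j, (T.q : ℤ) ∣ w j) : w ∈ T.lat := by
  intro j
  show (T.q : ℤ) ∣ ∑ k, T.A j k * w k
  refine Finset.dvd_sum fun k _ => ?_
  exact Dvd.dvd.mul_left (h k) _

lemma torusV_finite (T : TorusData n) : Finite (TorusV T) := by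
  haveI : NeZero T.q := ⟨q_ne_zero T⟩
  refine Finite.of_surjective
    (fun c : Fin n → ZMod T.q => tmk T (fun j => ((c j).val : ℤ))) ?_
  intro b
  obtain ⟨z, rfl⟩ : ∃ z, tmk T z = b := ⟨b.out, QuotientAddGroup.out_eq' b⟩
  refine ⟨fun j => ((z j : ZMod T.q)), ?_⟩
  rw [tmk_eq_iff]
  refine mem_lat_of_dvd fun j => ?_
  show (T.q : ℤ) ∣ (((z j : ZMod T.q).val : ℤ) - z j)
  rw [← ZMod.intCast_zmod_eq_zero_iff_dvd]
  push_cast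
  rw [ZMod.natCast_val, ZMod.cast_id]
  ring

lemma dist_nbr (hd : DistCond T) (a : TorusV T) (p : Fin n × Bool) :
    (torusG T).dist a (nbr a p) = 1 := by
  obtain ⟨u, rfl⟩ : ∃ u, tmk T u = a := ⟨a.out, QuotientAddGroup.out_eq' a⟩
  have : nbr (tmk T u) p = tmk T (u + dvec p) := rfl
  rw [this, torus_dist_eq hd u (dvec p) (by rw [norm1_dvec]; omega), norm1_dvec]

lemma lap_eq_sum (hd : DistCond T) (w : TorusV T → TorusV T → ℝ) (f : TorusV T → ℤ)
    (a : TorusV T) :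
    lap (torusG T) w f a = ∑ p : Fin n × Bool, w a (nbr a p) * ((f (nbr a p) : ℝ) - f a) := by
  classical
  rw [lap]
  have h1 : {y | (torusG T).Adj a y} = ↑(Finset.image (nbr a) Finset.univ) := by
    rw [nbr_set_eq hd]
    simp [Finset.coe_image]
  rw [h1, finsum_mem_coe_finset,
    Finset.sum_image (fun p _ p' _ h => nbr_inj hd a h)]

lemma scal_eq_sum (hd : DistCond T) (w : TorusV T → TorusV T → ℝ) (a : TorusV T) :
    scal (torusG T) w a = ∑ p : Fin n × Bool, kappa (torusG T) w a (nbr a p) := by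
  classical
  rw [scal]
  have h1 : {y | (torusG T).Adj a y} = ↑(Finset.image (nbr a) Finset.univ) := by
    rw [nbr_set_eq hd]
    simp [Finset.coe_image]
  rw [h1, finsum_mem_coe_finset,
    Finset.sum_image (fun p _ p' _ h => nbr_inj hd a h)]

end Torus2
section TestFunction

variable {n : ℕ} {T : TorusData n}

/-- The ℓ¹ ball of radius 2 as a finset. -/
def ballB (n : ℕ) : Finset (Fin n → ℤ) :=
  (Finset.Icc (fun _ => (-2 : ℤ)) (fun _ => 2)).filter (fun σ => norm1 σ ≤ 2)

lemma mem_ballB_of {σ : Fin n → ℤ} (h : norm1 σ ≤ 2) : σ ∈ ballB n := by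
  rw [ballB, Finset.mem_filter, Finset.mem_Icc]
  refine ⟨⟨fun k => ?_, fun k => ?_⟩, h⟩ <;>
  · have hk : (σ k).natAbs ≤ norm1 σ :=
      Finset.single_le_sum (f := fun j => (σ j).natAbs) (fun j _ => Nat.zero_le _)
        (Finset.mem_univ k)
    simp only []
    omega

lemma ballB_nonempty : (ballB n).Nonempty :=
  ⟨0, mem_ballB_of (by rw [norm1_zero]; omega)⟩

/-- The 1-Lipschitz test function adapted to the base point `x` and direction `i`. -/
def Ffun (T : TorusData n) (x : Fin n → ℤ) (i : Fin n) : TorusV T → ℤ :=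
  fun c => (ballB n).sup' ballB_nonempty
    (fun σ => σ i - ((torusG T).dist c (tmk T (x + σ)) : ℤ))

lemma Ffun_value (hd : DistCond T) (x : Fin n → ℤ) (i : Fin n) {σ' : Fin n → ℤ}
    (h : norm1 σ' ≤ 2) : Ffun T x i (tmk T (x + σ')) = σ' i := by
  apply le_antisymm
  · apply Finset.sup'_le
    intro σ hσ
    have hσ2 : norm1 σ ≤ 2 := (Finset.mem_filter.mp hσ).2
    have hdist : (torusG T).dist (tmk T (x + σ')) (tmk T (x + σ)) = norm1 (σ - σ') := by
      have heq : x + σ = (x + σ') + (σ - σ') := by ring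
      rw [heq]
      refine torus_dist_eq hd _ _ ?_
      have h1 := norm1_add_le σ (-σ')
      rw [norm1_neg] at h1
      rw [sub_eq_add_neg]
      omega
    rw [hdist]
    have h2 : σ i - σ' i ≤ (norm1 (σ - σ') : ℤ) := by
      have := coord_le_norm1 (σ - σ') i
      simpa [Pi.sub_apply] using this
    omega
  · have h3 : σ' i - (((torusG T).dist (tmk T (x + σ')) (tmk T (x + σ')) : ℕ) : ℤ) ≤
        Ffun T x i (tmk T (x + σ')) :=
      Finset.le_sup' (fun σ => σ i - (((torusG T).dist (tmk T (x + σ')) (tmk T (x + σ)) : ℕ) : ℤ))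
        (mem_ballB_of h)
    rw [SimpleGraph.dist_self] at h3
    omega

lemma Ffun_lip (hd : DistCond T) (x : Fin n → ℤ) (i : Fin n) :
    Lip1 (torusG T) (Ffun T x i) := by
  have key : ∀ c c' : TorusV T,
      Ffun T x i c - Ffun T x i c' ≤ ((torusG T).dist c c' : ℤ) := by
    intro c c'
    obtain ⟨σ₀, hσ₀mem, hσ₀⟩ := Finset.exists_mem_eq_sup' ballB_nonempty
      (fun σ => σ i - (((torusG T).dist c (tmk T (x + σ)) : ℕ) : ℤ))
    have h1 : σ₀ i - (((torusG T).dist c' (tmk T (x + σ₀)) : ℕ) : ℤ) ≤ Ffun T x i c' :=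
      Finset.le_sup' (fun σ => σ i - (((torusG T).dist c' (tmk T (x + σ)) : ℕ) : ℤ)) hσ₀mem
    have htri : (torusG T).dist c' (tmk T (x + σ₀)) ≤
        (torusG T).dist c' c + (torusG T).dist c (tmk T (x + σ₀)) :=
      (torus_connected hd).dist_triangle
    have hcomm : (torusG T).dist c' c = (torusG T).dist c c' := SimpleGraph.dist_comm
    have h2 : Ffun T x i c = σ₀ i - (((torusG T).dist c (tmk T (x + σ₀)) : ℕ) : ℤ) := hσ₀
    rw [h2]
    rw [hcomm] at htri
    have h4 : ((torusG T).dist c' (tmk T (x + σ₀)) : ℤ) ≤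
        ((torusG T).dist c c' : ℤ) + ((torusG T).dist c (tmk T (x + σ₀)) : ℤ) := by
      exact_mod_cast htri
    linarith [h1, h4]
  intro c c'
  rw [abs_sub_le_iff]
  refine ⟨key c c', ?_⟩
  have := key c' c
  rwa [SimpleGraph.dist_comm] at this

lemma norm1_e (i : Fin n) : norm1 (e n i) = 1 := by
  have := norm1_smul_e 1 i
  rwa [one_smul] at this

lemma nbr_true (a : TorusV T) (i : Fin n) : nbr a (i, true) = a + tmk T (e n i) := by
  rw [nbr, tmk_dvec_eq_pos]

lemma nbr_false (a : TorusV T) (i : Fin n) : nbr a (i, false) = a - tmk T (e n i) := by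
  rw [nbr, tmk_dvec_eq_neg, sub_eq_add_neg]

lemma lap_Ffun (hd : DistCond T) (w : TorusV T → TorusV T → ℝ) (x : Fin n → ℤ) (i : Fin n)
    {σ' : Fin n → ℤ} (h : norm1 σ' ≤ 1) :
    lap (torusG T) w (Ffun T x i) (tmk T (x + σ')) =
      w (tmk T (x + σ')) (nbr (tmk T (x + σ')) (i, true)) -
        w (tmk T (x + σ')) (nbr (tmk T (x + σ')) (i, false)) := by
  classical
  rw [lap_eq_sum hd]
  set a := tmk T (x + σ') with ha
  have hFa : Ffun T x i a = σ' i := Ffun_value hd x i (by omega)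
  have hnbr : ∀ p : Fin n × Bool, nbr a p = tmk T (x + (σ' + dvec p)) := by
    intro p
    rw [ha]
    show tmk T (x + σ') + tmk T (dvec p) = _
    rw [← tmk_add]
    congr 1
    ring
  have hFnbr : ∀ p : Fin n × Bool, Ffun T x i (nbr a p) = σ' i + dvec p i := by
    intro p
    rw [hnbr p, Ffun_value hd x i ?_]
    · rfl
    · have h1 := norm1_add_le σ' (dvec p)
      rw [norm1_dvec] at h1
      omega
  have hterm : ∀ p : Fin n × Bool,
      w a (nbr a p) * ((Ffun T x i (nbr a p) : ℝ) - (Ffun T x i a : ℝ)) =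
        w a (nbr a p) * ((dvec p i : ℤ) : ℝ) := by
    intro p
    rw [hFnbr p, hFa]
    push_cast
    ring
  rw [Finset.sum_congr rfl fun p _ => hterm p]
  rw [Fintype.sum_prod_type]
  have hinner : ∀ j : Fin n, (∑ b : Bool, w a (nbr a (j, b)) * ((dvec (j, b) i : ℤ) : ℝ)) =
      if j = i then w a (nbr a (i, true)) - w a (nbr a (i, false)) else 0 := by
    intro j
    have h1 : (dvec (j, true) i : ℤ) = if i = j then 1 else 0 := by
      rw [dvec_apply]; simp
    have h2 : (dvec (j, false) i : ℤ) = if i = j then -1 else 0 := by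
      rw [dvec_apply]; simp
    rw [Fintype.sum_bool, h1, h2]
    by_cases hj : j = i
    · have hj' : i = j := hj.symm
      rw [if_pos hj, if_pos hj', if_pos hj', hj]
      push_cast
      ring
    · rw [if_neg hj, if_neg (fun hc => hj hc.symm), if_neg (fun hc => hj hc.symm)]
      push_cast
      ring
  rw [Finset.sum_congr rfl fun j _ => hinner j]
  rw [Finset.sum_ite_eq' Finset.univ i
    (fun _ => w a (nbr a (i, true)) - w a (nbr a (i, false)))]
  simp

lemma lip1_neg {f : TorusV T → ℤ} (hf : Lip1 (torusG T) f) :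
    Lip1 (torusG T) (fun c => -f c) := by
  intro c c'
  have := hf c c'
  calc |(-f c) - (-f c')| = |f c - f c'| := by rw [← abs_neg]; congr 1; ring
  _ ≤ _ := this

lemma lap_neg (hd : DistCond T) (w : TorusV T → TorusV T → ℝ) (f : TorusV T → ℤ)
    (a : TorusV T) :
    lap (torusG T) w (fun c => -f c) a = -lap (torusG T) w f a := by
  rw [lap_eq_sum hd, lap_eq_sum hd, ← Finset.sum_neg_distrib]
  refine Finset.sum_congr rfl fun p _ => ?_
  push_cast
  ring

end TestFunction
section Main

variable {n : ℕ} {T : TorusData n}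

lemma kappa_le_of (hd : DistCond T) (w : TorusV T → TorusV T → ℝ) {a b : TorusV T}
    (f : TorusV T → ℤ) (hf : Lip1 (torusG T) f) (h1 : f b = f a + 1) :
    kappa (torusG T) w a b ≤ lap (torusG T) w f a - lap (torusG T) w f b := by
  have habs : ∀ (g : TorusV T → ℤ), Lip1 (torusG T) g → ∀ c : TorusV T,
      |lap (torusG T) w g c| ≤ ∑ p : Fin n × Bool, |w c (nbr c p)| := by
    intro g hg c
    rw [lap_eq_sum hd]
    refine (Finset.abs_sum_le_sum_abs _ _).trans ?_
    refine Finset.sum_le_sum fun p _ => ?_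
    rw [abs_mul]
    have hgd : |g (nbr c p) - g c| ≤ (1 : ℤ) := by
      have h0 := hg (nbr c p) c
      rw [SimpleGraph.dist_comm, dist_nbr hd] at h0
      simpa using h0
    have hcast : ((g (nbr c p) : ℝ) - (g c : ℝ)) = ((g (nbr c p) - g c : ℤ) : ℝ) := by
      push_cast; ring
    calc |w c (nbr c p)| * |(g (nbr c p) : ℝ) - (g c : ℝ)| ≤ |w c (nbr c p)| * 1 := by
          refine mul_le_mul_of_nonneg_left ?_ (abs_nonneg _)
          rw [hcast, ← Int.cast_abs]
          exact_mod_cast hgd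
    _ = |w c (nbr c p)| := mul_one _
  apply csInf_le
  · refine ⟨-((∑ p : Fin n × Bool, |w a (nbr a p)|) + (∑ p : Fin n × Bool, |w b (nbr b p)|)), ?_⟩
    rintro r ⟨g, hg, hgb, rfl⟩
    have ha' := abs_le.mp (habs g hg a)
    have hb' := abs_le.mp (habs g hg b)
    linarith [ha'.1, hb'.2]
  · exact ⟨f, hf, h1, rfl⟩

lemma e_self (i : Fin n) : e n i i = 1 := by simp [e]

lemma kappa_nbr_le (hd : DistCond T) (w : TorusV T → TorusV T → ℝ)
    (a : TorusV T) (p : Fin n × Bool) :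
    kappa (torusG T) w a (nbr a p) ≤
      (bif p.2 then
        (w a (a + tmk T (e n p.1)) - w a (a - tmk T (e n p.1))) -
          (w (a + tmk T (e n p.1)) (a + tmk T (e n p.1) + tmk T (e n p.1)) -
            w (a + tmk T (e n p.1)) a)
      else
        (w (a - tmk T (e n p.1)) a -
            w (a - tmk T (e n p.1)) (a - tmk T (e n p.1) - tmk T (e n p.1))) -
          (w a (a + tmk T (e n p.1)) - w a (a - tmk T (e n p.1)))) := by
  obtain ⟨x, hx⟩ : ∃ x, tmk T x = a := ⟨a.out, QuotientAddGroup.out_eq' a⟩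
  rcases p with ⟨i, bb⟩
  set t : TorusV T := tmk T (e n i) with ht
  have hA : a = tmk T (x + 0) := by rw [add_zero, hx]
  have hB : a + t = tmk T (x + e n i) := by rw [← hx, ht, tmk_add]
  have hC : a - t = tmk T (x + -e n i) := by
    rw [← hx, ht, tmk_add, tmk_neg, sub_eq_add_neg]
  have hFa : Ffun T x i a = 0 := by
    rw [hA, Ffun_value hd x i (by simp [norm1_zero])]
    rfl
  have hFb : Ffun T x i (a + t) = 1 := by
    rw [hB, Ffun_value hd x i (by rw [norm1_e]; omega), e_self]
  have hFc : Ffun T x i (a - t) = -1 := by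
    rw [hC, Ffun_value hd x i (by rw [norm1_neg, norm1_e]; omega)]
    simp [e]
  have hlapa : lap (torusG T) w (Ffun T x i) a = w a (a + t) - w a (a - t) := by
    conv_lhs => rw [hA]
    rw [lap_Ffun hd w x i (by simp [norm1_zero])]
    rw [← hA, nbr_true, nbr_false]
  have hlapb : lap (torusG T) w (Ffun T x i) (a + t) =
      w (a + t) (a + t + t) - w (a + t) a := by
    conv_lhs => rw [hB]
    rw [lap_Ffun hd w x i (by rw [norm1_e])]
    rw [← hB, nbr_true, nbr_false, add_sub_cancel_right]
  have hlapc : lap (torusG T) w (Ffun T x i) (a - t) =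
      w (a - t) a - w (a - t) (a - t - t) := by
    conv_lhs => rw [hC]
    rw [lap_Ffun hd w x i (by rw [norm1_neg, norm1_e])]
    rw [← hC, nbr_true, nbr_false, sub_add_cancel]
  cases bb
  · -- direction -e i : use the negated test function
    show kappa (torusG T) w a (nbr a (i, false)) ≤ _
    rw [nbr_false]
    have hlip := lip1_neg (Ffun_lip hd x i)
    have h1 : (fun c => -Ffun T x i c) (a - t) = (fun c => -Ffun T x i c) a + 1 := by
      simp only [hFa, hFc]
      ring
    have hk := kappa_le_of hd w _ hlip h1
    rw [lap_neg hd, lap_neg hd, hlapa, hlapc] at hk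
    calc kappa (torusG T) w a (a - t) ≤ _ := hk
    _ = (w (a - t) a - w (a - t) (a - t - t)) - (w a (a + t) - w a (a - t)) := by ring
  · show kappa (torusG T) w a (nbr a (i, true)) ≤ _
    rw [nbr_true]
    have h1 : Ffun T x i (a + t) = Ffun T x i a + 1 := by rw [hFa, hFb]; ring
    have hk := kappa_le_of hd w _ (Ffun_lip hd x i) h1
    rw [hlapa, hlapb] at hk
    calc kappa (torusG T) w a (a + t) ≤ _ := hk
    _ = (w a (a + t) - w a (a - t)) - (w (a + t) (a + t + t) - w (a + t) a) := by ring

end Main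
/-- the total scalar curvature of a discrete weighted torus satisfying the
distance condition is non-positive. -/
theorem torus_total_curvature_nonpos (n : ℕ) (T : TorusData n)
    (wT : TorusV T → TorusV T → ℝ)
    (hsymm : ∀ a b, wT a b = wT b a)
    (hpos : ∀ a b, (torusG T).Adj a b → 0 < wT a b)
    (hdist : DistCond T) :
    ∑ᶠ a : TorusV T, scal (torusG T) wT a ≤ 0 := by
  classical
  letI : Finite (TorusV T) := torusV_finite T
  letI : Fintype (TorusV T) := Fintype.ofFinite _
  rw [finsum_eq_sum_of_fintype]
  have hle : ∑ a : TorusV T, scal (torusG T) wT a ≤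
      ∑ a : TorusV T, ∑ p : Fin n × Bool,
        (bif p.2 then
          (wT a (a + tmk T (e n p.1)) - wT a (a - tmk T (e n p.1))) -
            (wT (a + tmk T (e n p.1)) (a + tmk T (e n p.1) + tmk T (e n p.1)) -
              wT (a + tmk T (e n p.1)) a)
        else
          (wT (a - tmk T (e n p.1)) a -
              wT (a - tmk T (e n p.1)) (a - tmk T (e n p.1) - tmk T (e n p.1))) -
            (wT a (a + tmk T (e n p.1)) - wT a (a - tmk T (e n p.1)))) := by
    refine Finset.sum_le_sum fun a _ => ?_
    rw [scal_eq_sum hdist]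
    exact Finset.sum_le_sum fun p _ => kappa_nbr_le hdist wT a p
  refine hle.trans (le_of_eq ?_)
  rw [Finset.sum_comm]
  apply Finset.sum_eq_zero
  intro p _
  rcases p with ⟨i, bb⟩
  set t : TorusV T := tmk T (e n i) with ht
  have e1 : ∑ a : TorusV T, wT (a + t) (a + t + t) = ∑ a : TorusV T, wT a (a + t) :=
    Fintype.sum_equiv (Equiv.addRight t) _ _ (fun a => rfl)
  have e2 : ∑ a : TorusV T, wT (a + t) a = ∑ a : TorusV T, wT a (a - t) :=
    Fintype.sum_equiv (Equiv.addRight t) _ _ (fun a => by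
      simp [add_sub_cancel_right])
  have e3 : ∑ a : TorusV T, wT (a - t) a = ∑ a : TorusV T, wT a (a + t) :=
    Fintype.sum_equiv (Equiv.subRight t) _ _ (fun a => by
      simp [sub_add_cancel])
  have e4 : ∑ a : TorusV T, wT (a - t) (a - t - t) = ∑ a : TorusV T, wT a (a - t) :=
    Fintype.sum_equiv (Equiv.subRight t) _ _ (fun a => rfl)
  cases bb
  · show (∑ a : TorusV T,
        ((wT (a - t) a - wT (a - t) (a - t - t)) - (wT a (a + t) - wT a (a - t)))) = 0
    rw [Finset.sum_sub_distrib, Finset.sum_sub_distrib, Finset.sum_sub_distrib, e3, e4]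
    ring
  · show (∑ a : TorusV T,
        ((wT a (a + t) - wT a (a - t)) - (wT (a + t) (a + t + t) - wT (a + t) a))) = 0
    rw [Finset.sum_sub_distrib, Finset.sum_sub_distrib, Finset.sum_sub_distrib, e1, e2]
    ring

end PMT
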